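/- Let D be a DAG on a finite vertex set V in which every edge is protected, let s ∉ V be a new vertex, and let P ⊆ V. Let D' be the graph on V ∪ {s} obtained from D by adding an edge v→s for every v ∈ P and no other edges. Then D' is a DAG in which s is a sink, and every edge of D' is protected if and only if P ≠ {v} ∪ pa(v) for every v ∈ V (where pa is taken in D). -/
import Mathlib


/-- A DAG on a vertex type `V`: an irreflexive relation with no directed cycles
(its transitive closure is irreflexive). -/
def IsDag {V : Type*} (E : V → V → Prop) : Prop :=
  Irreflexive E ∧ Irreflexive (Relation.TransGen E)

/-- The set of parents of `b`. -/
def pa {V : Type*} (E : V → V → Prop) (b : V) : Set V := {a | E a b}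

/-- An edge `a → b` is protected if `pa b \ {a} ≠ pa a`. -/
def IsProtectedEdge {V : Type*} (E : V → V → Prop) (a b : V) : Prop :=
  pa E b \ {a} ≠ pa E a

/-- Adding a new sink `s` (modelled as `none : Option V`) with parent set `P ⊆ V`
to a DAG all of whose edges are protected yields a DAG in which `s` is a sink, and
every edge of the new graph is protected iff `P ≠ {v} ∪ pa(v)` for every `v ∈ V`. -/
theorem add_sink_protected {V : Type*} [Fintype V]
    (E : V → V → Prop) (hE : IsDag E)
    (hp : ∀ a b, E a b → IsProtectedEdge E a b)
    (P : Set V)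
    (E' : Option V → Option V → Prop)
    (h1 : ∀ v w : V, E' (some v) (some w) ↔ E v w)
    (h2 : ∀ v : V, E' (some v) none ↔ v ∈ P)
    (h3 : ∀ y : Option V, ¬ E' none y) :
    IsDag E' ∧ (∀ y : Option V, ¬ E' none y) ∧
      ((∀ a b : Option V, E' a b → IsProtectedEdge E' a b) ↔
        ∀ v : V, P ≠ insert v (pa E v)) := by
  have hinj : Function.Injective (some : V → Option V) := fun a b h => Option.some_injective V h
  -- parent sets in E'
  have paSome : ∀ w : V, pa E' (some w) = some '' pa E w := by
    intro w
    ext a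
    cases a with
    | none => simp [pa, h3]
    | some v => simp [pa, h1 v w]
  have paNone : pa E' none = some '' P := by
    ext a
    cases a with
    | none => simp [pa, h3]
    | some v => simp [pa, h2 v]
  -- transgen from some to some gives transgen in E
  have htrans : ∀ x y : Option V, Relation.TransGen E' x y →
      ∀ v w : V, x = some v → y = some w → Relation.TransGen E v w := by
    intro x y h
    induction h with
    | single h =>
      rintro v w rfl rfl
      exact Relation.TransGen.single ((h1 v w).mp h)
    | @tail b c hb hbc ih =>
      rintro v w rfl rfl
      cases b with
      | none => exact absurd hbc (h3 _)
      | some u => exact Relation.TransGen.tail (ih v u rfl rfl) ((h1 u w).mp hbc)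
  have hnone : ∀ y, ¬ Relation.TransGen E' none y := by
    intro y h
    induction h with
    | single h => exact h3 _ h
    | tail _ _ ih => exact ih
  refine ⟨⟨?_, ?_⟩, h3, ?_⟩
  · intro a
    cases a with
    | none => exact h3 none
    | some v => rw [h1]; exact hE.1 v
  · intro a h
    cases a with
    | none => exact hnone _ h
    | some v => exact hE.2 v (htrans _ _ h v v rfl rfl)
  · constructor
    · intro hall v hPv
      have hvP : v ∈ P := by rw [hPv]; exact Set.mem_insert _ _
      have := hall (some v) none ((h2 v).mpr hvP)
      apply this
      rw [paNone, paSome]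
      have hvpa : v ∉ pa E v := hE.1 v
      have : P \ {v} = pa E v := by
        rw [hPv, Set.insert_diff_of_mem _ (Set.mem_singleton v),
          Set.diff_singleton_eq_self hvpa]
      rw [← this]
      ext a
      cases a with
      | none => simp
      | some u => simp [Set.mem_diff, Set.mem_image]
    · intro hne a b hab
      cases a with
      | none => exact absurd hab (h3 _)
      | some v =>
        cases b with
        | none =>
          have hvP : v ∈ P := (h2 v).mp hab
          intro hcontra
          rw [paNone, paSome] at hcontra
          have hPdiff : P \ {v} = pa E v := by
            apply hinj.image_injective
            rw [← hcontra]
            ext a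
            cases a with
            | none => simp
            | some u => simp [Set.mem_diff, Set.mem_image]
          apply hne v
          rw [← hPdiff, Set.insert_diff_singleton, Set.insert_eq_self.mpr hvP]
        | some w =>
          have hEvw : E v w := (h1 v w).mp hab
          intro hcontra
          rw [paSome, paSome] at hcontra
          apply hp v w hEvw
          apply hinj.image_injective
          rw [← hcontra]
          ext a
          cases a with
          | none => simp
          | some u => simp [Set.mem_diff, Set.mem_image]
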